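/- Let a, b > 0, α > 0, and let A = [[a, -1/α],[1, a]] and B = [[b, -1/α],[1, a]] be 2×2 complex matrices. Then the eigenvalues of B⁻¹A are λ₁ = 1 and λ₂ = (1 + α a²)/(1 + α a b), and both are real. -/

import Mathlib

theorem stmt_18 (a b α : ℝ) (ha : 0 < a) (hb : 0 < b) (hα : 0 < α)
    (A B : Matrix (Fin 2) (Fin 2) ℂ)
    (hA : A = !![(a : ℂ), -(1 / (α : ℂ)); 1, (a : ℂ)])
    (hB : B = !![(b : ℂ), -(1 / (α : ℂ)); 1, (a : ℂ)]) :
    spectrum ℂ (B⁻¹ * A) =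
      {(1 : ℂ), (((1 + α * a ^ 2) / (1 + α * a * b) : ℝ) : ℂ)} := by
  have hαc : (α : ℂ) ≠ 0 := by exact_mod_cast hα.ne'
  have hdenR : (1 + α * a * b) ≠ 0 := by positivity
  have hden : (1 + (α : ℂ) * a * b) ≠ 0 := by exact_mod_cast hdenR
  have hdetB : B.det ≠ 0 := by
    rw [hB, Matrix.det_fin_two_of]
    have e : (b : ℂ) * a - -(1 / α) * 1 = b * a + 1 / α := by ring
    rw [e]
    intro h
    have h1 : (α : ℂ) * (b * a) + 1 = 0 := by
      field_simp at h
      linear_combination h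
    have h2 : (α * (b * a) + 1 : ℝ) = 0 := by exact_mod_cast h1
    nlinarith [mul_pos hb ha]
  have hdetBu : IsUnit B.det := isUnit_iff_ne_zero.2 hdetB
  have hBu : IsUnit B := (Matrix.isUnit_iff_isUnit_det B).2 hdetBu
  have hBB : B * B⁻¹ = 1 := Matrix.mul_nonsing_inv B hdetBu
  have hBB' : B⁻¹ * B = 1 := Matrix.nonsing_inv_mul B hdetBu
  have hBiu : IsUnit (B⁻¹) := by
    rw [Matrix.isUnit_iff_isUnit_det, Matrix.det_nonsing_inv]
    exact isUnit_iff_ne_zero.2 (by simp [Ring.inverse_eq_inv', inv_ne_zero hdetB])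
  ext μ
  rw [spectrum.mem_iff]
  have key : IsUnit (algebraMap ℂ (Matrix (Fin 2) (Fin 2) ℂ) μ - B⁻¹ * A) ↔
      IsUnit (μ • B - A) := by
    constructor
    · intro h
      have := hBu.mul h
      rwa [mul_sub, Algebra.algebraMap_eq_smul_one, mul_smul_comm, mul_one,
        ← mul_assoc, hBB, one_mul] at this
    · intro h
      have := hBiu.mul h
      rw [mul_sub, mul_smul_comm, hBB'] at this
      rwa [Algebra.algebraMap_eq_smul_one]
  rw [← not_iff_not] at key
  rw [key]
  have hM : μ • B - A = !![μ * b - a, -(μ / α) + 1 / α; μ - 1, μ * a - a] := by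
    rw [hA, hB]
    ext i j
    fin_cases i <;> fin_cases j <;> simp [Matrix.smul_apply] <;> ring
  rw [hM, Matrix.isUnit_iff_isUnit_det, Matrix.det_fin_two_of, isUnit_iff_ne_zero, not_not]
  have hfac : (μ * b - a) * (μ * a - a) - (-(μ / α) + 1 / α) * (μ - 1)
      = (μ - 1) * ((a * (μ * b - a) * α + (μ - 1)) / α) := by
    field_simp
    ring
  rw [hfac, mul_eq_zero, div_eq_zero_iff, sub_eq_zero]
  simp only [Set.mem_insert_iff, Set.mem_singleton_iff]
  constructor
  · rintro (h | h | h)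
    · exact Or.inl h
    · right
      push_cast
      rw [eq_div_iff hden]
      linear_combination h
    · exact absurd h hαc
  · rintro (h | h)
    · exact Or.inl h
    · right; left
      rw [h]; push_cast
      field_simp
      have hd : (1 + (a : ℂ) * α * b) ≠ 0 := by convert hden using 1; ring
      field_simp
      ring
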